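/- Let f be a set of natural numbers, d > 0 a real constant, c > 0, α > −1, and suppose there is a constant C₀ > 0 such that |π_f(x) − d·∫_2^x dt/ln t| ≤ C₀·x·exp(−c·√(ln x)) for all x ≥ 2. Then there exist constants C > 0 and c' > 0 such that for all x ≥ 2: |∑_{p prime, p ≤ x, p ∈ f} p^α − d·∫_2^x t^α/ln t dt| ≤ C·x^{α+1}·exp(−c'·√(ln x)). -/

import Mathlib

open Filter

/-- `primeCountIn f t` is the number of primes `p ≤ t` with `p ∈ f`. -/
noncomputable def primeCountIn (f : Set ℕ) (t : ℝ) : ℕ :=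
  {p : ℕ | p.Prime ∧ p ∈ f ∧ (p : ℝ) ≤ t}.ncard

open scoped Classical in
/-- `primeSumIn f g x` is the sum of `g p` over primes `p ≤ x` with `p ∈ f`. -/
noncomputable def primeSumIn (f : Set ℕ) (g : ℝ → ℝ) (x : ℝ) : ℝ :=
  ∑ p ∈ (Finset.range (⌊x⌋₊ + 1)).filter (fun p => p.Prime ∧ p ∈ f), g p

open scoped Classical
open MeasureTheory intervalIntegral

/-- indicator of primes in `f`. -/
noncomputable def cIn (f : Set ℕ) (k : ℕ) : ℝ := if k.Prime ∧ k ∈ f then 1 else 0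

/-- summatory function of `cIn`. -/
noncomputable def cA (f : Set ℕ) (t : ℝ) : ℝ := ∑ k ∈ Finset.Icc 0 ⌊t⌋₊, cIn f k

/-- logarithmic integral from 2. -/
noncomputable def myLi (t : ℝ) : ℝ := ∫ s in (2:ℝ)..t, 1 / Real.log s

lemma cIn_nonneg (f : Set ℕ) (k : ℕ) : 0 ≤ cIn f k := by
  unfold cIn; split_ifs <;> norm_num

lemma cA_mono (f : Set ℕ) : Monotone (cA f) := fun s t hst =>
  Finset.sum_le_sum_of_subset_of_nonneg
    (Finset.Icc_subset_Icc_right (Nat.floor_le_floor hst))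
    (fun k _ _ => cIn_nonneg f k)

lemma cA_nonneg (f : Set ℕ) (t : ℝ) : 0 ≤ cA f t :=
  Finset.sum_nonneg fun k _ => cIn_nonneg f k

lemma cA_small (f : Set ℕ) {t : ℝ} (h1 : 1 ≤ t) (h2 : t < 2) : cA f t = 0 := by
  have hfl : ⌊t⌋₊ = 1 := by
    rw [Nat.floor_eq_iff (by linarith)]
    constructor <;> push_cast <;> linarith
  unfold cA
  rw [hfl, show Finset.Icc 0 1 = {0, 1} from by decide]
  refine Finset.sum_eq_zero fun k hk => ?_
  simp only [Finset.mem_insert, Finset.mem_singleton] at hk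
  unfold cIn
  rw [if_neg]
  rintro ⟨hp, -⟩
  rcases hk with rfl | rfl
  · exact Nat.not_prime_zero hp
  · exact Nat.not_prime_one hp

lemma primeCountIn_eq_cA (f : Set ℕ) {t : ℝ} (ht : 0 ≤ t) :
    (primeCountIn f t : ℝ) = cA f t := by
  have hset : {p : ℕ | p.Prime ∧ p ∈ f ∧ (p : ℝ) ≤ t} =
      ((Finset.Icc 0 ⌊t⌋₊).filter fun p => p.Prime ∧ p ∈ f : Finset ℕ) := by
    ext p
    simp only [Set.mem_setOf_eq, Finset.coe_filter, Finset.mem_Icc]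
    constructor
    · rintro ⟨h1, h2, h3⟩; exact ⟨⟨Nat.zero_le _, Nat.le_floor h3⟩, h1, h2⟩
    · rintro ⟨⟨-, h3⟩, h1, h2⟩; exact ⟨h1, h2, (Nat.le_floor_iff ht).mp h3⟩
  rw [primeCountIn, hset, Set.ncard_coe_finset, cA]
  unfold cIn
  rw [Finset.sum_boole]

lemma primeSumIn_eq (f : Set ℕ) (α x : ℝ) :
    primeSumIn f (fun t => t ^ α) x = ∑ k ∈ Finset.Ioc 1 ⌊x⌋₊, (k : ℝ) ^ α * cIn f k := by
  rw [primeSumIn]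
  have h1 : ∑ k ∈ Finset.Ioc 1 ⌊x⌋₊, (k : ℝ) ^ α * cIn f k
      = ∑ k ∈ (Finset.Ioc 1 ⌊x⌋₊).filter (fun p => p.Prime ∧ p ∈ f), (k : ℝ) ^ α := by
    rw [Finset.sum_filter]
    refine Finset.sum_congr rfl fun k _ => ?_
    unfold cIn; split_ifs <;> simp
  rw [h1]
  congr 1
  ext a
  simp only [Finset.mem_filter, Finset.mem_range, Finset.mem_Ioc, Nat.lt_succ_iff]
  constructor
  · rintro ⟨h1, h2, h3⟩; exact ⟨⟨h2.one_lt, h1⟩, h2, h3⟩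
  · rintro ⟨⟨-, h1⟩, h2, h3⟩; exact ⟨h1, h2, h3⟩

lemma contOn_one_div_log : ContinuousOn (fun s : ℝ => 1 / Real.log s) (Set.Ioi 1) := by
  intro t ht
  have h1 : (1:ℝ) < t := ht
  exact (continuousAt_const.div (Real.continuousAt_log (by linarith))
    (ne_of_gt (Real.log_pos h1))).continuousWithinAt

lemma hasDerivAt_myLi {t : ℝ} (ht : (2:ℝ) ≤ t) :
    HasDerivAt myLi (1 / Real.log t) t := by
  have h1 : (1:ℝ) < t := by linarith
  have hsub : Set.uIcc (2:ℝ) t ⊆ Set.Ioi 1 := by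
    rw [Set.uIcc_of_le ht]
    intro s hs
    exact Set.mem_Ioi.mpr (by have := hs.1; linarith)
  exact intervalIntegral.integral_hasDerivAt_right
    ((contOn_one_div_log.mono hsub).intervalIntegrable)
    (contOn_one_div_log.stronglyMeasurableAtFilter isOpen_Ioi t h1)
    (contOn_one_div_log.continuousAt (Ioi_mem_nhds h1))

lemma exp_key {c c' β t x : ℝ} (hc'c : c' ≤ c) (hβ : 0 < β)
    (hc'β : c' ≤ β * Real.sqrt (Real.log 2)) (ht : 2 ≤ t) (htx : t ≤ x) :
    Real.exp (-c * Real.sqrt (Real.log t)) ≤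
      (x / t) ^ β * Real.exp (-c' * Real.sqrt (Real.log x)) := by
  have ht0 : (0:ℝ) < t := by linarith
  have hx0 : (0:ℝ) < x := by linarith
  have hxt : 0 < x / t := div_pos hx0 ht0
  rw [Real.rpow_def_of_pos hxt, ← Real.exp_add, Real.exp_le_exp,
    Real.log_div (ne_of_gt hx0) (ne_of_gt ht0)]
  set u := Real.sqrt (Real.log t) with hu
  set v := Real.sqrt (Real.log x) with hv
  set s := Real.sqrt (Real.log 2) with hs
  have hlt : 0 ≤ Real.log t := Real.log_nonneg (by linarith)
  have hlx : 0 ≤ Real.log x := Real.log_nonneg (by linarith)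
  have hu2 : u ^ 2 = Real.log t := Real.sq_sqrt hlt
  have hv2 : v ^ 2 = Real.log x := Real.sq_sqrt hlx
  have huv : u ≤ v := Real.sqrt_le_sqrt (Real.log_le_log ht0 htx)
  have hsu : s ≤ u := Real.sqrt_le_sqrt (Real.log_le_log (by norm_num) ht)
  have hu0 : 0 ≤ u := Real.sqrt_nonneg _
  have hs0 : 0 ≤ s := Real.sqrt_nonneg _
  rw [← hu2, ← hv2]
  have h1 : c' ≤ β * (v + u) := by nlinarith
  nlinarith [mul_nonneg (sub_nonneg.2 huv) (sub_nonneg.2 h1),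
    mul_nonneg (sub_nonneg.2 hc'c) hu0]

set_option maxHeartbeats 1000000 in
theorem stmt10 (f : Set ℕ) (d : ℝ) (hd : 0 < d) (c : ℝ) (hc : 0 < c)
    (α : ℝ) (hα : -1 < α) (C₀ : ℝ) (hC₀ : 0 < C₀)
    (hpi : ∀ x : ℝ, 2 ≤ x →
      |(primeCountIn f x : ℝ) - d * ∫ t in (2 : ℝ)..x, 1 / Real.log t| ≤
        C₀ * x * Real.exp (-c * Real.sqrt (Real.log x))) :
    ∃ C : ℝ, 0 < C ∧ ∃ c' : ℝ, 0 < c' ∧ ∀ x : ℝ, 2 ≤ x →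
      |primeSumIn f (fun t => t ^ α) x -
          d * ∫ t in (2 : ℝ)..x, t ^ α / Real.log t| ≤
        C * x ^ (α + 1) * Real.exp (-c' * Real.sqrt (Real.log x)) := by
  have hs2 : 0 < Real.sqrt (Real.log 2) := Real.sqrt_pos.mpr (Real.log_pos one_lt_two)
  set β : ℝ := min (c / Real.sqrt (Real.log 2)) ((α + 1) / 2) with hβdef
  have hβ : 0 < β := lt_min (div_pos hc hs2) (by linarith)
  have hβα : β ≤ (α + 1) / 2 := min_le_right _ _
  set c' : ℝ := min c (β * Real.sqrt (Real.log 2)) with hc'def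
  have hc'0 : 0 < c' := lt_min hc (mul_pos hβ hs2)
  have hc'c : c' ≤ c := min_le_left _ _
  have hc'β : c' ≤ β * Real.sqrt (Real.log 2) := min_le_right _ _
  have hγ : 0 < α - β + 1 := by linarith
  have habsnn : 0 ≤ |α| / (α - β + 1) := div_nonneg (abs_nonneg α) hγ.le
  refine ⟨C₀ * (1 + |α| / (α - β + 1)), by nlinarith, c', hc'0, ?_⟩
  intro x hx
  have hx0 : (0:ℝ) < x := by linarith
  have hx1 : (1:ℝ) ≤ x := by linarith
  -- Abel summation
  have hdiff : ∀ t ∈ Set.Icc (1:ℝ) x, DifferentiableAt ℝ (fun t : ℝ => t ^ α) t :=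
    fun t ht => (Real.hasDerivAt_rpow_const (Or.inl (by have := ht.1; positivity))).differentiableAt
  have hderiv_eq : ∀ t : ℝ, 0 < t → deriv (fun t : ℝ => t ^ α) t = α * t ^ (α - 1) :=
    fun t ht => Real.deriv_rpow_const t α
  have hcontd : ContinuousOn (fun t : ℝ => α * t ^ (α - 1)) (Set.Icc 1 x) := by
    refine continuousOn_const.mul fun t ht => ?_
    exact (Real.continuousAt_rpow_const t (α - 1)
      (Or.inl (by have := ht.1; positivity))).continuousWithinAt
  have hint : IntegrableOn (deriv (fun t : ℝ => t ^ α)) (Set.Icc 1 x) := by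
    refine (hcontd.integrableOn_Icc).congr_fun ?_ measurableSet_Icc
    intro t ht
    exact (hderiv_eq t (by have := ht.1; linarith)).symm
  have habel := sum_mul_eq_sub_sub_integral_mul (f := fun t : ℝ => t ^ α) (cIn f)
    (a := 1) (b := x) zero_le_one hx1 hdiff hint
  rw [Nat.floor_one] at habel
  have hA1 : ∑ k ∈ Finset.Icc 0 1, cIn f k = 0 := by
    rw [show Finset.Icc 0 1 = {0, 1} from by decide]
    refine Finset.sum_eq_zero fun k hk => ?_
    simp only [Finset.mem_insert, Finset.mem_singleton] at hk
    unfold cIn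
    rw [if_neg]
    rintro ⟨hp, -⟩
    rcases hk with rfl | rfl
    · exact Nat.not_prime_zero hp
    · exact Nat.not_prime_one hp
  rw [hA1, mul_zero, sub_zero] at habel
  have hSx : primeSumIn f (fun t => t ^ α) x =
      x ^ α * cA f x - ∫ t in Set.Ioc 1 x, deriv (fun t : ℝ => t ^ α) t *
        ∑ k ∈ Finset.Icc 0 ⌊t⌋₊, cIn f k := by
    rw [primeSumIn_eq, cA]
    exact habel
  -- the integral term
  set h : ℝ → ℝ := fun t => α * t ^ (α - 1) * cA f t with hhdef
  have hJeq : (∫ t in Set.Ioc 1 x, deriv (fun t : ℝ => t ^ α) t *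
      ∑ k ∈ Finset.Icc 0 ⌊t⌋₊, cIn f k) = ∫ t in (1:ℝ)..x, h t := by
    rw [intervalIntegral.integral_of_le hx1]
    refine setIntegral_congr_fun measurableSet_Ioc fun t ht => ?_
    rw [hderiv_eq t (by have := ht.1; linarith)]
    rfl
  -- integrability of h
  have hhint : IntegrableOn h (Set.Icc 1 x) := by
    constructor
    · exact (hcontd.aestronglyMeasurable measurableSet_Icc).mul
        ((cA_mono f).measurable.aestronglyMeasurable.restrict)
    · refine HasFiniteIntegral.restrict_of_bounded
        (C := |α| * (x ^ (α-1) + 1) * cA f x) measure_Icc_lt_top ?_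
      refine (ae_restrict_mem measurableSet_Icc).mono fun t ht => ?_
      have ht1 : (1:ℝ) ≤ t := ht.1
      have ht0 : (0:ℝ) < t := by linarith
      have htx : t ≤ x := ht.2
      have hrnn : (0:ℝ) ≤ t ^ (α - 1) := Real.rpow_nonneg ht0.le _
      have hbd : t ^ (α - 1) ≤ x ^ (α - 1) + 1 := by
        rcases le_or_gt 0 (α - 1) with h' | h'
        · have := Real.rpow_le_rpow ht0.le htx h'
          linarith
        · have h1 : t ^ (α - 1) ≤ t ^ (0:ℝ) :=
            Real.rpow_le_rpow_of_exponent_le ht1 h'.le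
          have h2 : (0:ℝ) ≤ x ^ (α - 1) := Real.rpow_nonneg hx0.le _
          rw [Real.rpow_zero] at h1
          linarith
      have hAx : cA f t ≤ cA f x := cA_mono f htx
      have hAnn := cA_nonneg f t
      show ‖α * t ^ (α - 1) * cA f t‖ ≤ _
      rw [Real.norm_eq_abs, abs_mul, abs_mul, abs_of_nonneg hrnn, abs_of_nonneg hAnn]
      have hM0 : (0:ℝ) ≤ |α| := abs_nonneg α
      have hxr : (0:ℝ) ≤ x ^ (α - 1) + 1 := by
        have := Real.rpow_nonneg hx0.le (α - 1); linarith
      exact mul_le_mul (mul_le_mul le_rfl hbd hrnn hM0) hAx hAnn (mul_nonneg hM0 hxr)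
  have hII12 : IntervalIntegrable h volume 1 2 :=
    (intervalIntegrable_iff_integrableOn_Icc_of_le one_le_two).mpr
      (hhint.mono_set (Set.Icc_subset_Icc le_rfl hx))
  have hII2x : IntervalIntegrable h volume 2 x :=
    (intervalIntegrable_iff_integrableOn_Icc_of_le hx).mpr
      (hhint.mono_set (Set.Icc_subset_Icc one_le_two le_rfl))
  have hzero : (∫ t in (1:ℝ)..2, h t) = 0 := by
    rw [intervalIntegral.integral_of_le one_le_two]
    refine integral_eq_zero_of_ae ?_
    rw [Filter.EventuallyEq, ae_restrict_iff' measurableSet_Ioc]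
    have hae : ∀ᵐ t : ℝ, t ≠ (2:ℝ) := by
      rw [ae_iff]
      simpa using measure_singleton (2:ℝ)
    filter_upwards [hae] with t h2 ht
    have ht2 : t < 2 := lt_of_le_of_ne ht.2 h2
    show h t = 0
    rw [hhdef]
    simp [cA_small f ht.1.le ht2]
  have hSx2 : primeSumIn f (fun t => t ^ α) x =
      x ^ α * cA f x - ∫ t in (2:ℝ)..x, h t := by
    rw [hSx, hJeq, ← intervalIntegral.integral_add_adjacent_intervals hII12 hII2x, hzero,
      zero_add]
  -- main term: integration by parts
  have hLicont : ContinuousOn myLi (Set.Icc 2 x) := fun t ht =>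
    (hasDerivAt_myLi ht.1).continuousAt.continuousWithinAt
  have hIcc_sub : Set.Icc (2:ℝ) x ⊆ Set.Ioi 1 := fun t ht => by
    have := ht.1; exact Set.mem_Ioi.mpr (by linarith)
  have hcont2 : ContinuousOn (fun t : ℝ => α * t ^ (α - 1)) (Set.Icc 2 x) :=
    hcontd.mono (Set.Icc_subset_Icc one_le_two le_rfl)
  have hcontpow : ContinuousOn (fun t : ℝ => t ^ α) (Set.Icc 2 x) := fun t ht =>
    (Real.continuousAt_rpow_const t α (Or.inl (by have := ht.1; positivity))).continuousWithinAt
  have hcontlog : ContinuousOn (fun t : ℝ => t ^ α * (1 / Real.log t)) (Set.Icc 2 x) :=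
    hcontpow.mul (contOn_one_div_log.mono hIcc_sub)
  have hILi_int : IntervalIntegrable (fun t : ℝ => α * t ^ (α - 1) * myLi t) volume 2 x := by
    refine ContinuousOn.intervalIntegrable ?_
    rw [Set.uIcc_of_le hx]
    exact hcont2.mul hLicont
  have hIlog_int : IntervalIntegrable (fun t : ℝ => t ^ α * (1 / Real.log t)) volume 2 x := by
    refine ContinuousOn.intervalIntegrable ?_
    rw [Set.uIcc_of_le hx]
    exact hcontlog
  have hIBP : (∫ t in (2:ℝ)..x, (α * t ^ (α - 1) * myLi t + t ^ α * (1 / Real.log t))) =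
      x ^ α * myLi x - (2:ℝ) ^ α * myLi 2 := by
    refine intervalIntegral.integral_eq_sub_of_hasDerivAt (f := fun t : ℝ => t ^ α * myLi t)
      (fun t ht => ?_) ?_
    · rw [Set.uIcc_of_le hx] at ht
      have ht0 : (0:ℝ) < t := by have := ht.1; linarith
      exact (Real.hasDerivAt_rpow_const (p := α) (Or.inl ht0.ne')).mul
        (hasDerivAt_myLi ht.1)
    · refine ContinuousOn.intervalIntegrable ?_
      rw [Set.uIcc_of_le hx]
      exact (hcont2.mul hLicont).add hcontlog
  have hLi2 : myLi 2 = 0 := intervalIntegral.integral_same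
  rw [hLi2, mul_zero, sub_zero, intervalIntegral.integral_add hILi_int hIlog_int] at hIBP
  have hIlog_eq : (∫ t in (2:ℝ)..x, t ^ α * (1 / Real.log t)) =
      ∫ t in (2:ℝ)..x, t ^ α / Real.log t := by
    simp only [mul_one_div]
  rw [hIlog_eq] at hIBP
  -- split ∫ h into main part and error part
  set g : ℝ → ℝ := fun t => α * t ^ (α - 1) * (d * myLi t) with hgdef
  have hgint : IntervalIntegrable g volume 2 x := by
    refine ContinuousOn.intervalIntegrable ?_
    rw [Set.uIcc_of_le hx]
    exact hcont2.mul (continuousOn_const.mul hLicont)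
  have hEint : IntervalIntegrable (fun t => h t - g t) volume 2 x := hII2x.sub hgint
  have hhsplit : (∫ t in (2:ℝ)..x, h t) =
      (∫ t in (2:ℝ)..x, g t) + ∫ t in (2:ℝ)..x, (h t - g t) := by
    rw [intervalIntegral.integral_sub hII2x hgint]; ring
  have hgd : (∫ t in (2:ℝ)..x, g t) =
      d * ∫ t in (2:ℝ)..x, α * t ^ (α - 1) * myLi t := by
    rw [← intervalIntegral.integral_const_mul]
    refine intervalIntegral.integral_congr fun t _ => ?_
    show α * t ^ (α - 1) * (d * myLi t) = d * (α * t ^ (α - 1) * myLi t)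
    ring
  -- the key identity
  have key : primeSumIn f (fun t => t ^ α) x -
      d * (∫ t in (2:ℝ)..x, t ^ α / Real.log t) =
      x ^ α * (cA f x - d * myLi x) - ∫ t in (2:ℝ)..x, (h t - g t) := by
    rw [hSx2, hhsplit, hgd]
    linear_combination (-d) * hIBP
  -- bound the boundary error term
  set e' : ℝ := Real.exp (-c' * Real.sqrt (Real.log x)) with he'def
  have he'0 : 0 < e' := Real.exp_pos _
  have hEx : |cA f x - d * myLi x| ≤ C₀ * x * Real.exp (-c * Real.sqrt (Real.log x)) := by
    have h' := hpi x hx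
    rwa [primeCountIn_eq_cA f (by linarith : (0:ℝ) ≤ x)] at h'
  have hxαnn : (0:ℝ) ≤ x ^ α := Real.rpow_nonneg hx0.le _
  have hxα1 : x ^ (α + 1) = x ^ α * x := Real.rpow_add_one hx0.ne' α
  have hexpmono : Real.exp (-c * Real.sqrt (Real.log x)) ≤ e' := by
    rw [he'def, Real.exp_le_exp]
    have := Real.sqrt_nonneg (Real.log x)
    nlinarith
  have hB1 : |x ^ α * (cA f x - d * myLi x)| ≤ C₀ * x ^ (α + 1) * e' := by
    rw [abs_mul, abs_of_nonneg hxαnn]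
    calc x ^ α * |cA f x - d * myLi x|
        ≤ x ^ α * (C₀ * x * Real.exp (-c * Real.sqrt (Real.log x))) :=
          mul_le_mul_of_nonneg_left hEx hxαnn
      _ ≤ x ^ α * (C₀ * x * e') := by
          have h0 : (0:ℝ) ≤ x ^ α * (C₀ * x) := by positivity
          nlinarith
      _ = C₀ * x ^ (α + 1) * e' := by rw [hxα1]; ring
  -- bound the integral error term pointwise
  set K : ℝ := |α| * C₀ * (x ^ β * e') with hKdef
  have hK0 : 0 ≤ K := by positivity
  have hpt : ∀ t ∈ Set.Icc (2:ℝ) x, |h t - g t| ≤ K * t ^ (α - β) := by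
    intro t ht
    have ht2 : (2:ℝ) ≤ t := ht.1
    have htx : t ≤ x := ht.2
    have ht0 : (0:ℝ) < t := by linarith
    have hEt : |cA f t - d * myLi t| ≤ C₀ * t * Real.exp (-c * Real.sqrt (Real.log t)) := by
      have h' := hpi t ht2
      rwa [primeCountIn_eq_cA f (by linarith : (0:ℝ) ≤ t)] at h'
    have hhg : h t - g t = α * t ^ (α - 1) * (cA f t - d * myLi t) := by
      rw [hhdef, hgdef]; ring
    have hrnn : (0:ℝ) ≤ t ^ (α - 1) := Real.rpow_nonneg ht0.le _
    have step1 : |h t - g t| ≤ |α| * t ^ (α - 1) * (C₀ * t *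
        Real.exp (-c * Real.sqrt (Real.log t))) := by
      rw [hhg, abs_mul, abs_mul, abs_of_nonneg hrnn]
      exact mul_le_mul_of_nonneg_left hEt (by positivity)
    have hta : t ^ (α - 1) * t = t ^ α := by
      rw [← Real.rpow_add_one ht0.ne' (α - 1)]
      norm_num
    have hek := exp_key (c := c) (c' := c') (β := β) (t := t) (x := x) hc'c hβ hc'β ht2 htx
    have htab : t ^ α * (x / t) ^ β = x ^ β * t ^ (α - β) := by
      rw [Real.rpow_sub ht0, Real.div_rpow hx0.le ht0.le]
      ring
    calc |h t - g t|
        ≤ |α| * t ^ (α - 1) * (C₀ * t * Real.exp (-c * Real.sqrt (Real.log t))) := step1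
      _ = |α| * C₀ * (t ^ α * Real.exp (-c * Real.sqrt (Real.log t))) := by
          rw [← hta]; ring
      _ ≤ |α| * C₀ * (t ^ α * ((x / t) ^ β * e')) := by
          refine mul_le_mul_of_nonneg_left ?_ (by positivity)
          exact mul_le_mul_of_nonneg_left hek (Real.rpow_nonneg ht0.le _)
      _ = K * t ^ (α - β) := by
          rw [hKdef]
          linear_combination (|α| * C₀ * e') * htab
  -- integrate the pointwise bound
  have hrint : IntervalIntegrable (fun t : ℝ => K * t ^ (α - β)) volume 2 x := by
    refine ContinuousOn.intervalIntegrable ?_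
    rw [Set.uIcc_of_le hx]
    refine continuousOn_const.mul fun t ht => ?_
    exact (Real.continuousAt_rpow_const t (α - β)
      (Or.inl (by have := ht.1; positivity))).continuousWithinAt
  have hB2 : |∫ t in (2:ℝ)..x, (h t - g t)| ≤ C₀ * (|α| / (α - β + 1)) * x ^ (α + 1) * e' := by
    have habs : |∫ t in (2:ℝ)..x, (h t - g t)| ≤ ∫ t in (2:ℝ)..x, |h t - g t| :=
      intervalIntegral.abs_integral_le_integral_abs hx
    have hmono : (∫ t in (2:ℝ)..x, |h t - g t|) ≤ ∫ t in (2:ℝ)..x, K * t ^ (α - β) :=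
      intervalIntegral.integral_mono_on hx hEint.abs hrint hpt
    have hval : (∫ t in (2:ℝ)..x, K * t ^ (α - β)) =
        K * ((x ^ (α - β + 1) - 2 ^ (α - β + 1)) / (α - β + 1)) := by
      rw [intervalIntegral.integral_const_mul, integral_rpow (Or.inl (by linarith))]
    have h2nn : (0:ℝ) ≤ (2:ℝ) ^ (α - β + 1) := Real.rpow_nonneg (by norm_num) _
    have hle : K * ((x ^ (α - β + 1) - 2 ^ (α - β + 1)) / (α - β + 1)) ≤
        K * (x ^ (α - β + 1) / (α - β + 1)) := by
      refine mul_le_mul_of_nonneg_left ?_ hK0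
      refine div_le_div_of_nonneg_right ?_ hγ.le
      linarith
    have hxsplit : x ^ β * x ^ (α - β + 1) = x ^ (α + 1) := by
      rw [← Real.rpow_add hx0]
      congr 1
      ring
    have heq : K * (x ^ (α - β + 1) / (α - β + 1)) =
        C₀ * (|α| / (α - β + 1)) * x ^ (α + 1) * e' := by
      rw [hKdef, ← hxsplit]
      field_simp
    calc |∫ t in (2:ℝ)..x, (h t - g t)| ≤ ∫ t in (2:ℝ)..x, K * t ^ (α - β) :=
          habs.trans hmono
      _ = K * ((x ^ (α - β + 1) - 2 ^ (α - β + 1)) / (α - β + 1)) := hval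
      _ ≤ K * (x ^ (α - β + 1) / (α - β + 1)) := hle
      _ = C₀ * (|α| / (α - β + 1)) * x ^ (α + 1) * e' := heq
  -- conclude
  have hxα1nn : (0:ℝ) ≤ x ^ (α + 1) := Real.rpow_nonneg hx0.le _
  calc |primeSumIn f (fun t => t ^ α) x - d * ∫ t in (2:ℝ)..x, t ^ α / Real.log t|
      = |x ^ α * (cA f x - d * myLi x) - ∫ t in (2:ℝ)..x, (h t - g t)| := by rw [key]
    _ ≤ |x ^ α * (cA f x - d * myLi x)| + |∫ t in (2:ℝ)..x, (h t - g t)| := abs_sub _ _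
    _ ≤ C₀ * x ^ (α + 1) * e' + C₀ * (|α| / (α - β + 1)) * x ^ (α + 1) * e' :=
        add_le_add hB1 hB2
    _ = C₀ * (1 + |α| / (α - β + 1)) * x ^ (α + 1) * e' := by ring
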